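/- Let H be a finite-dimensional semisimple Hopf algebra over a field of characteristic zero with Haar integral ℓ. Then e = ℓ₍₁₎ ⊗ S(ℓ₍₂₎) is a separability idempotent for H, i.e. m(e) = 1 and (h·ℓ₍₁₎) ⊗ S(ℓ₍₂₎) = ℓ₍₁₎ ⊗ (S(ℓ₍₂₎)·h) for all h ∈ H. -/

import Mathlib

open TensorProduct
open Coalgebra HopfAlgebra

section Aux
variable {F H : Type*} [CommSemiring F] [Semiring H] [HopfAlgebra F H]

lemma aux_sum_counit_smul {a : H} (r : Coalgebra.Repr F a (H × H)) :
    ∑ i ∈ r.index, Coalgebra.counit (R := F) (r.left i) • r.right i = a := by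
  have h := Coalgebra.sum_counit_tmul_eq (R := F) r
  apply_fun (TensorProduct.lid F H) at h
  simpa [map_sum, -Coalgebra.sum_counit_tmul_eq] using h

lemma aux_sum_smul_counit {a : H} (r : Coalgebra.Repr F a (H × H)) :
    ∑ i ∈ r.index, Coalgebra.counit (R := F) (r.right i) • r.left i = a := by
  have h := Coalgebra.sum_tmul_counit_eq (R := F) r
  apply_fun (TensorProduct.rid F H) at h
  simpa [map_sum, -Coalgebra.sum_tmul_counit_eq] using h

lemma aux_repr_swap {M : Type*} [AddCommMonoid M] [Module F M]
    (φ : H ⊗[F] (H ⊗[F] H) →ₗ[F] M) {a : H} (r : Coalgebra.Repr F a (H × H))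
    (r1 : ∀ i, Coalgebra.Repr F (r.left i) (H × H)) (r2 : ∀ i, Coalgebra.Repr F (r.right i) (H × H)) :
    ∑ i ∈ r.index, ∑ j ∈ (r1 i).index,
      φ ((r1 i).left j ⊗ₜ[F] ((r1 i).right j ⊗ₜ[F] r.right i)) =
    ∑ i ∈ r.index, ∑ j ∈ (r2 i).index,
      φ (r.left i ⊗ₜ[F] ((r2 i).left j ⊗ₜ[F] (r2 i).right j)) := by
  simpa [map_sum] using congrArg φ (Coalgebra.sum_tmul_tmul_eq r r1 r2)

noncomputable def triMul (f g h : H →ₗ[F] H) : H ⊗[F] (H ⊗[F] H) →ₗ[F] H :=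
  LinearMap.mul' F H ∘ₗ TensorProduct.map f (LinearMap.mul' F H ∘ₗ TensorProduct.map g h)

@[simp] lemma triMul_tmul (f g h : H →ₗ[F] H) (x y z : H) :
    triMul f g h (x ⊗ₜ[F] (y ⊗ₜ[F] z)) = f x * (g y * h z) := by
  simp [triMul]

lemma sum_smul_mul_sum_smul {ι κ : Type*} (s : Finset ι) (t : Finset κ)
    (c : ι → F) (d : κ → F) (p : ι → H) (q : κ → H) :
    (∑ i ∈ s, c i • p i) * (∑ j ∈ t, d j • q j) =
      ∑ i ∈ s, ∑ j ∈ t, (c i * d j) • (p i * q j) := by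
  rw [Finset.sum_mul_sum]
  refine Finset.sum_congr rfl fun i _ => Finset.sum_congr rfl fun j _ => ?_
  rw [smul_mul_assoc, mul_smul_comm, smul_smul]

noncomputable def midMul (e : H ⊗[F] H) : H ⊗[F] H →ₗ[F] H ⊗[F] H :=
  TensorProduct.lift (LinearMap.mk₂ F (fun x y => (x ⊗ₜ[F] (1:H)) * e * ((1:H) ⊗ₜ[F] y))
    (fun x x' y => by simp only [add_tmul, add_mul])
    (fun c x y => by simp only [← smul_tmul', smul_mul_assoc])
    (fun x y y' => by simp only [tmul_add, mul_add])
    (fun c x y => by simp only [tmul_smul, mul_smul_comm]))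

@[simp] lemma midMul_tmul (e : H ⊗[F] H) (x y : H) :
    midMul e (x ⊗ₜ[F] y) = (x ⊗ₜ[F] (1:H)) * e * ((1:H) ⊗ₜ[F] y) := rfl

lemma sum4_comm {ι ι' M : Type*} {κ : ι → Type*} {κ' : ι' → Type*} [AddCommMonoid M]
    (s : Finset ι) (ks : ∀ i, Finset (κ i))
    (t : Finset ι') (ls : ∀ j, Finset (κ' j)) (f : ∀ i, κ i → ∀ j, κ' j → M) :
    ∑ i ∈ s, ∑ k ∈ ks i, ∑ j ∈ t, ∑ l ∈ ls j, f i k j l =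
    ∑ j ∈ t, ∑ l ∈ ls j, ∑ i ∈ s, ∑ k ∈ ks i, f i k j l := by
  calc ∑ i ∈ s, ∑ k ∈ ks i, ∑ j ∈ t, ∑ l ∈ ls j, f i k j l
      = ∑ i ∈ s, ∑ j ∈ t, ∑ k ∈ ks i, ∑ l ∈ ls j, f i k j l :=
        Finset.sum_congr rfl fun i _ => Finset.sum_comm
    _ = ∑ j ∈ t, ∑ i ∈ s, ∑ k ∈ ks i, ∑ l ∈ ls j, f i k j l := Finset.sum_comm
    _ = ∑ j ∈ t, ∑ i ∈ s, ∑ l ∈ ls j, ∑ k ∈ ks i, f i k j l :=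
        Finset.sum_congr rfl fun j _ => Finset.sum_congr rfl fun i _ => Finset.sum_comm
    _ = ∑ j ∈ t, ∑ l ∈ ls j, ∑ i ∈ s, ∑ k ∈ ks i, f i k j l :=
        Finset.sum_congr rfl fun j _ => Finset.sum_comm

theorem antipode_mul'' (a b : H) :
    antipode (R := F) (a * b) = antipode (R := F) b * antipode (R := F) a := by
  classical
  have A : Coalgebra.Repr F a (H × H) := Coalgebra.Repr.arbitrary F a
  have B : Coalgebra.Repr F b (H × H) := Coalgebra.Repr.arbitrary F b
  have A1 : ∀ i, Coalgebra.Repr F (A.left i) (H × H) := fun i => Coalgebra.Repr.arbitrary F _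
  have A2 : ∀ i, Coalgebra.Repr F (A.right i) (H × H) := fun i => Coalgebra.Repr.arbitrary F _
  have B1 : ∀ j, Coalgebra.Repr F (B.left j) (H × H) := fun j => Coalgebra.Repr.arbitrary F _
  have B2 : ∀ j, Coalgebra.Repr F (B.right j) (H × H) := fun j => Coalgebra.Repr.arbitrary F _
  set C : H := ∑ i ∈ A.index, ∑ k ∈ (A2 i).index, ∑ j ∈ B.index, ∑ l ∈ (B2 j).index,
      antipode (R := F) (A.left i * B.left j) *
        (((A2 i).left k * (B2 j).left l) *
          (antipode (R := F) ((B2 j).right l) * antipode (R := F) ((A2 i).right k))) with hC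
  have wayA : C = antipode (R := F) (a * b) := by
    have step1 : C = ∑ i ∈ A.index, ∑ k ∈ (A2 i).index, ∑ j ∈ B.index,
        Coalgebra.counit (R := F) (B.right j) •
          ((antipode (R := F) (A.left i * B.left j) * (A2 i).left k) *
            antipode (R := F) ((A2 i).right k)) := by
      rw [hC]
      refine Finset.sum_congr rfl fun i _ => Finset.sum_congr rfl fun k _ =>
        Finset.sum_congr rfl fun j _ => ?_
      have h1 : ∀ l ∈ (B2 j).index, antipode (R := F) (A.left i * B.left j) *
          (((A2 i).left k * (B2 j).left l) *
            (antipode (R := F) ((B2 j).right l) * antipode (R := F) ((A2 i).right k))) =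
          (antipode (R := F) (A.left i * B.left j) * (A2 i).left k) *
            (((B2 j).left l * antipode (R := F) ((B2 j).right l)) *
              antipode (R := F) ((A2 i).right k)) := by
        intros; simp only [mul_assoc]
      rw [Finset.sum_congr rfl h1, ← Finset.mul_sum, ← Finset.sum_mul,
        sum_mul_antipode_eq_smul (B2 j), smul_mul_assoc, one_mul, mul_smul_comm]
    have step2 : C = ∑ i ∈ A.index, ∑ j ∈ B.index,
        (Coalgebra.counit (R := F) (A.right i) * Coalgebra.counit (R := F) (B.right j)) •
          antipode (R := F) (A.left i * B.left j) := by
      rw [step1]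
      refine (Finset.sum_congr rfl fun i _ => Finset.sum_comm).trans ?_
      refine Finset.sum_congr rfl fun i _ => Finset.sum_congr rfl fun j _ => ?_
      have h1 : ∀ k ∈ (A2 i).index,
          (antipode (R := F) (A.left i * B.left j) * (A2 i).left k) *
            antipode (R := F) ((A2 i).right k) =
          antipode (R := F) (A.left i * B.left j) *
            ((A2 i).left k * antipode (R := F) ((A2 i).right k)) := by
        intros; rw [mul_assoc]
      rw [← Finset.smul_sum, Finset.sum_congr rfl h1, ← Finset.mul_sum,
        sum_mul_antipode_eq_smul (A2 i), mul_smul_comm, mul_one, smul_smul, mul_comm]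
    rw [step2]
    calc ∑ i ∈ A.index, ∑ j ∈ B.index,
          (Coalgebra.counit (R := F) (A.right i) * Coalgebra.counit (R := F) (B.right j)) •
            antipode (R := F) (A.left i * B.left j)
        = antipode (R := F) (∑ i ∈ A.index, ∑ j ∈ B.index,
            (Coalgebra.counit (R := F) (A.right i) * Coalgebra.counit (R := F) (B.right j)) •
              (A.left i * B.left j)) := by simp [map_sum, map_smul]
      _ = antipode (R := F) ((∑ i ∈ A.index, Coalgebra.counit (R := F) (A.right i) • A.left i) *
            (∑ j ∈ B.index, Coalgebra.counit (R := F) (B.right j) • B.left j)) := by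
          rw [sum_smul_mul_sum_smul]
      _ = antipode (R := F) (a * b) := by rw [aux_sum_smul_counit A, aux_sum_smul_counit B]
  have wayB : C = antipode (R := F) b * antipode (R := F) a := by
    have r1 : C = ∑ j ∈ B.index, ∑ l ∈ (B2 j).index, ∑ i ∈ A.index, ∑ k ∈ (A2 i).index,
        antipode (R := F) (A.left i * B.left j) *
          (((A2 i).left k * (B2 j).left l) *
            (antipode (R := F) ((B2 j).right l) * antipode (R := F) ((A2 i).right k))) := by
      rw [hC]
      exact sum4_comm A.index (fun i => (A2 i).index) B.index (fun j => (B2 j).index)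
        (fun i k j l => antipode (R := F) (A.left i * B.left j) *
          (((A2 i).left k * (B2 j).left l) *
            (antipode (R := F) ((B2 j).right l) * antipode (R := F) ((A2 i).right k))))
    have r2 : C = ∑ j ∈ B.index, ∑ l ∈ (B2 j).index, ∑ i ∈ A.index, ∑ k ∈ (A1 i).index,
        antipode (R := F) ((A1 i).left k * B.left j) *
          (((A1 i).right k * (B2 j).left l) *
            (antipode (R := F) ((B2 j).right l) * antipode (R := F) (A.right i))) := by
      rw [r1]
      refine Finset.sum_congr rfl fun j _ => Finset.sum_congr rfl fun l _ => ?_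
      have hsw := aux_repr_swap
        (triMul ((antipode (R := F)) ∘ₗ LinearMap.mulRight F (B.left j))
          (LinearMap.mulRight F ((B2 j).left l))
          ((LinearMap.mulLeft F (antipode (R := F) ((B2 j).right l))) ∘ₗ (antipode (R := F))))
        A A1 A2
      simpa [triMul_tmul, LinearMap.comp_apply, LinearMap.mulLeft_apply,
        LinearMap.mulRight_apply] using hsw.symm
    have r3 : C = ∑ i ∈ A.index, ∑ k ∈ (A1 i).index, ∑ j ∈ B.index, ∑ l ∈ (B2 j).index,
        antipode (R := F) ((A1 i).left k * B.left j) *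
          (((A1 i).right k * (B2 j).left l) *
            (antipode (R := F) ((B2 j).right l) * antipode (R := F) (A.right i))) := by
      rw [r2]
      exact sum4_comm B.index (fun j => (B2 j).index) A.index (fun i => (A1 i).index)
        (fun j l i k => antipode (R := F) ((A1 i).left k * B.left j) *
          (((A1 i).right k * (B2 j).left l) *
            (antipode (R := F) ((B2 j).right l) * antipode (R := F) (A.right i))))
    have r4 : C = ∑ i ∈ A.index, ∑ k ∈ (A1 i).index, ∑ j ∈ B.index, ∑ l ∈ (B1 j).index,
        antipode (R := F) ((A1 i).left k * (B1 j).left l) *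
          (((A1 i).right k * (B1 j).right l) *
            (antipode (R := F) (B.right j) * antipode (R := F) (A.right i))) := by
      rw [r3]
      refine Finset.sum_congr rfl fun i _ => Finset.sum_congr rfl fun k _ => ?_
      have hsw := aux_repr_swap
        (triMul ((antipode (R := F)) ∘ₗ LinearMap.mulLeft F ((A1 i).left k))
          (LinearMap.mulLeft F ((A1 i).right k))
          ((LinearMap.mulRight F (antipode (R := F) (A.right i))) ∘ₗ (antipode (R := F))))
        B B1 B2
      simpa [triMul_tmul, LinearMap.comp_apply, LinearMap.mulLeft_apply,
        LinearMap.mulRight_apply] using hsw.symm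
    have key : ∀ i ∈ A.index, ∀ j ∈ B.index,
        ∑ k ∈ (A1 i).index, ∑ l ∈ (B1 j).index,
          antipode (R := F) ((A1 i).left k * (B1 j).left l) *
            ((A1 i).right k * (B1 j).right l) =
        (Coalgebra.counit (R := F) (A.left i) * Coalgebra.counit (R := F) (B.left j)) •
          (1 : H) := by
      intro i _ j _
      have hcm : Coalgebra.comul (R := F) (A.left i * B.left j) =
          ∑ k ∈ (A1 i).index, ∑ l ∈ (B1 j).index,
            ((A1 i).left k * (B1 j).left l) ⊗ₜ[F] ((A1 i).right k * (B1 j).right l) := by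
        rw [Bialgebra.comul_mul, ← (A1 i).eq, ← (B1 j).eq, Finset.sum_mul_sum]
        simp [Algebra.TensorProduct.tmul_mul_tmul]
      have h2 := mul_antipode_rTensor_comul_apply (R := F) (a := A.left i * B.left j)
      rw [hcm] at h2
      simpa [map_sum, LinearMap.rTensor_tmul, LinearMap.mul'_apply, Bialgebra.counit_mul,
        Algebra.algebraMap_eq_smul_one] using h2
    have r5 : C = ∑ i ∈ A.index, ∑ j ∈ B.index,
        (Coalgebra.counit (R := F) (A.left i) * Coalgebra.counit (R := F) (B.left j)) •
          (antipode (R := F) (B.right j) * antipode (R := F) (A.right i)) := by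
      rw [r4]
      refine (Finset.sum_congr rfl fun i _ => Finset.sum_comm).trans ?_
      refine Finset.sum_congr rfl fun i hi => Finset.sum_congr rfl fun j hj => ?_
      have h1 : ∀ k ∈ (A1 i).index, ∀ l ∈ (B1 j).index,
          antipode (R := F) ((A1 i).left k * (B1 j).left l) *
            (((A1 i).right k * (B1 j).right l) *
              (antipode (R := F) (B.right j) * antipode (R := F) (A.right i))) =
          (antipode (R := F) ((A1 i).left k * (B1 j).left l) *
            ((A1 i).right k * (B1 j).right l)) *
              (antipode (R := F) (B.right j) * antipode (R := F) (A.right i)) := by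
        intros; rw [← mul_assoc]
      calc ∑ k ∈ (A1 i).index, ∑ l ∈ (B1 j).index,
            antipode (R := F) ((A1 i).left k * (B1 j).left l) *
              (((A1 i).right k * (B1 j).right l) *
                (antipode (R := F) (B.right j) * antipode (R := F) (A.right i)))
          = (∑ k ∈ (A1 i).index, ∑ l ∈ (B1 j).index,
              antipode (R := F) ((A1 i).left k * (B1 j).left l) *
                ((A1 i).right k * (B1 j).right l)) *
              (antipode (R := F) (B.right j) * antipode (R := F) (A.right i)) := by
            rw [Finset.sum_mul]
            refine Finset.sum_congr rfl fun k hk => ?_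
            rw [Finset.sum_mul]
            exact Finset.sum_congr rfl fun l hl => h1 k hk l hl
        _ = ((Coalgebra.counit (R := F) (A.left i) * Coalgebra.counit (R := F) (B.left j)) •
              (1 : H)) *
              (antipode (R := F) (B.right j) * antipode (R := F) (A.right i)) := by
            rw [key i hi j hj]
        _ = (Coalgebra.counit (R := F) (A.left i) * Coalgebra.counit (R := F) (B.left j)) •
              (antipode (R := F) (B.right j) * antipode (R := F) (A.right i)) := by
            rw [smul_mul_assoc, one_mul]
    have e1 : ∑ j ∈ B.index,
        Coalgebra.counit (R := F) (B.left j) • antipode (R := F) (B.right j) =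
        antipode (R := F) b := by
      simp only [← map_smul, ← map_sum]
      rw [aux_sum_counit_smul B]
    have e2 : ∑ i ∈ A.index,
        Coalgebra.counit (R := F) (A.left i) • antipode (R := F) (A.right i) =
        antipode (R := F) a := by
      simp only [← map_smul, ← map_sum]
      rw [aux_sum_counit_smul A]
    have final : ∑ i ∈ A.index, ∑ j ∈ B.index,
        (Coalgebra.counit (R := F) (A.left i) * Coalgebra.counit (R := F) (B.left j)) •
          (antipode (R := F) (B.right j) * antipode (R := F) (A.right i)) =
        (∑ j ∈ B.index,
          Coalgebra.counit (R := F) (B.left j) • antipode (R := F) (B.right j)) *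
        (∑ i ∈ A.index,
          Coalgebra.counit (R := F) (A.left i) • antipode (R := F) (A.right i)) := by
      calc ∑ i ∈ A.index, ∑ j ∈ B.index,
            (Coalgebra.counit (R := F) (A.left i) * Coalgebra.counit (R := F) (B.left j)) •
              (antipode (R := F) (B.right j) * antipode (R := F) (A.right i))
          = ∑ i ∈ A.index, ∑ j ∈ B.index,
            (Coalgebra.counit (R := F) (B.left j) * Coalgebra.counit (R := F) (A.left i)) •
              (antipode (R := F) (B.right j) * antipode (R := F) (A.right i)) := by
            exact Finset.sum_congr rfl fun i _ => Finset.sum_congr rfl fun j _ => by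
              rw [mul_comm (Coalgebra.counit (R := F) (A.left i))
                (Coalgebra.counit (R := F) (B.left j))]
        _ = ∑ j ∈ B.index, ∑ i ∈ A.index,
            (Coalgebra.counit (R := F) (B.left j) * Coalgebra.counit (R := F) (A.left i)) •
              (antipode (R := F) (B.right j) * antipode (R := F) (A.right i)) :=
            Finset.sum_comm
        _ = (∑ j ∈ B.index,
              Coalgebra.counit (R := F) (B.left j) • antipode (R := F) (B.right j)) *
            (∑ i ∈ A.index,
              Coalgebra.counit (R := F) (A.left i) • antipode (R := F) (A.right i)) :=
            (sum_smul_mul_sum_smul _ _ _ _ _ _).symm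
    rw [r5, final, e1, e2]
  rw [← wayA, wayB]

lemma map_mulLeft_eq (x : H) (u : H ⊗[F] H) :
    TensorProduct.map (LinearMap.mulLeft F x) LinearMap.id u = (x ⊗ₜ[F] (1:H)) * u := by
  induction u using TensorProduct.induction_on with
  | zero => simp
  | tmul a b => simp [Algebra.TensorProduct.tmul_mul_tmul]
  | add u v hu hv => simp only [map_add, hu, hv, mul_add]

lemma map_mulRight_eq (x : H) (u : H ⊗[F] H) :
    TensorProduct.map LinearMap.id (LinearMap.mulRight F x) u = u * ((1:H) ⊗ₜ[F] x) := by
  induction u using TensorProduct.induction_on with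
  | zero => simp
  | tmul a b => simp [Algebra.TensorProduct.tmul_mul_tmul]
  | add u v hu hv => simp only [map_add, hu, hv, add_mul]

lemma map_antipode_mul_tmul (a b : H) (v : H ⊗[F] H) :
    TensorProduct.map LinearMap.id (antipode (R := F)) ((a ⊗ₜ[F] b) * v) =
      (a ⊗ₜ[F] (1:H)) * (TensorProduct.map LinearMap.id (antipode (R := F)) v) *
        ((1:H) ⊗ₜ[F] antipode (R := F) b) := by
  induction v using TensorProduct.induction_on with
  | zero => simp
  | tmul c d =>
      simp [Algebra.TensorProduct.tmul_mul_tmul, antipode_mul'']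
  | add v w hv hw => simp only [mul_add, map_add, hv, hw, add_mul]

lemma map_antipode_mul (u w : H ⊗[F] H) :
    TensorProduct.map LinearMap.id (antipode (R := F)) (u * w) =
      midMul (TensorProduct.map LinearMap.id (antipode (R := F)) w)
        (TensorProduct.map LinearMap.id (antipode (R := F)) u) := by
  induction u using TensorProduct.induction_on with
  | zero => simp only [zero_mul, map_zero]
  | tmul a b => rw [map_antipode_mul_tmul]; simp
  | add u v hu hv => simp only [add_mul, map_add, hu, hv]

end Aux


/-- Let `H` be a finite-dimensional semisimple Hopf algebra over a field of
characteristic zero with Haar integral `ℓ`.  Then `e = ℓ₍₁₎ ⊗ S(ℓ₍₂₎)` is a separability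
idempotent for `H`: `m(e) = 1` and `(h * ℓ₍₁₎) ⊗ S(ℓ₍₂₎) = ℓ₍₁₎ ⊗ (S(ℓ₍₂₎) * h)` for all
`h ∈ H`.  Here `e = (id ⊗ S)(Δ ℓ)`. -/
theorem haar_separability_idempotent
    (F H : Type*) [Field F] [CharZero F]
    [Ring H] [HopfAlgebra F H]
    [FiniteDimensional F H] [IsSemisimpleRing H]
    (ℓ : H)
    (hL : ∀ h : H, h * ℓ = Coalgebra.counit (R := F) h • ℓ)
    (hR : ∀ h : H, ℓ * h = Coalgebra.counit (R := F) h • ℓ)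
    (hc : Coalgebra.counit (R := F) ℓ = 1) :
    LinearMap.mul' F H
        (TensorProduct.map LinearMap.id (HopfAlgebra.antipode (R := F))
          (Coalgebra.comul (R := F) ℓ)) = 1 ∧
    ∀ h : H,
      TensorProduct.map (LinearMap.mulLeft F h) LinearMap.id
          (TensorProduct.map LinearMap.id (HopfAlgebra.antipode (R := F))
            (Coalgebra.comul (R := F) ℓ))
        = TensorProduct.map LinearMap.id (LinearMap.mulRight F h)
            (TensorProduct.map LinearMap.id (HopfAlgebra.antipode (R := F))
              (Coalgebra.comul (R := F) ℓ)) := by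
  constructor
  · have h1 := HopfAlgebra.mul_antipode_lTensor_comul_apply (R := F) (a := ℓ)
    rw [hc, map_one] at h1
    exact h1
  · intro h
    set e := TensorProduct.map (LinearMap.id : H →ₗ[F] H) (antipode (R := F))
      (Coalgebra.comul (R := F) ℓ) with he
    rw [map_mulLeft_eq, map_mulRight_eq]
    have hconv : ∀ k : H,
        midMul e (TensorProduct.map LinearMap.id (antipode (R := F))
          (Coalgebra.comul (R := F) k)) = Coalgebra.counit (R := F) k • e := by
      intro k
      rw [he, ← map_antipode_mul, ← Bialgebra.comul_mul, hL k, map_smul, map_smul]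
    have A : Coalgebra.Repr F h (H × H) := Coalgebra.Repr.arbitrary F h
    have A1 : ∀ i, Coalgebra.Repr F (A.left i) (H × H) := fun i => Coalgebra.Repr.arbitrary F _
    have A2 : ∀ i, Coalgebra.Repr F (A.right i) (H × H) := fun i => Coalgebra.Repr.arbitrary F _
    set E := ∑ i ∈ A.index, ∑ k ∈ (A1 i).index,
        ((A1 i).left k ⊗ₜ[F] (1:H)) * e *
          ((1:H) ⊗ₜ[F] (antipode (R := F) ((A1 i).right k) * A.right i)) with hE
    have hE1 : E = e * ((1:H) ⊗ₜ[F] h) := by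
      rw [hE]
      calc ∑ i ∈ A.index, ∑ k ∈ (A1 i).index,
            ((A1 i).left k ⊗ₜ[F] (1:H)) * e *
              ((1:H) ⊗ₜ[F] (antipode (R := F) ((A1 i).right k) * A.right i))
          = ∑ i ∈ A.index,
              (midMul e (TensorProduct.map LinearMap.id (antipode (R := F))
                (Coalgebra.comul (R := F) (A.left i)))) * ((1:H) ⊗ₜ[F] A.right i) := by
            refine Finset.sum_congr rfl fun i _ => ?_
            have expand : TensorProduct.map LinearMap.id (antipode (R := F))
                (Coalgebra.comul (R := F) (A.left i)) =
                ∑ k ∈ (A1 i).index,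
                  (A1 i).left k ⊗ₜ[F] antipode (R := F) ((A1 i).right k) := by
              rw [← (A1 i).eq, map_sum]; simp
            rw [expand, map_sum, Finset.sum_mul]
            refine Finset.sum_congr rfl fun k _ => ?_
            simp [mul_assoc, Algebra.TensorProduct.tmul_mul_tmul]
          _ = ∑ i ∈ A.index,
              (Coalgebra.counit (R := F) (A.left i) • e) * ((1:H) ⊗ₜ[F] A.right i) := by
            exact Finset.sum_congr rfl fun i _ => by rw [hconv (A.left i)]
          _ = e * ((1:H) ⊗ₜ[F] h) := by
            conv_rhs => rw [← aux_sum_counit_smul A]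
            rw [tmul_sum, Finset.mul_sum]
            refine Finset.sum_congr rfl fun i _ => ?_
            rw [smul_mul_assoc, tmul_smul, mul_smul_comm]
    have hE2 : E = (h ⊗ₜ[F] (1:H)) * e := by
      set f2 : H ⊗[F] (H ⊗[F] H) →ₗ[F] H ⊗[F] H :=
        midMul e ∘ₗ TensorProduct.map LinearMap.id
          (LinearMap.mul' F H ∘ₗ TensorProduct.map (antipode (R := F)) LinearMap.id) with hf2
      have f2_tmul : ∀ x y z : H, f2 (x ⊗ₜ[F] (y ⊗ₜ[F] z)) =
          (x ⊗ₜ[F] (1:H)) * e * ((1:H) ⊗ₜ[F] (antipode (R := F) y * z)) := by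
        intro x y z; simp [hf2]
      rw [hE]
      calc ∑ i ∈ A.index, ∑ k ∈ (A1 i).index,
            ((A1 i).left k ⊗ₜ[F] (1:H)) * e *
              ((1:H) ⊗ₜ[F] (antipode (R := F) ((A1 i).right k) * A.right i))
          = ∑ i ∈ A.index, ∑ k ∈ (A1 i).index,
              f2 ((A1 i).left k ⊗ₜ[F] ((A1 i).right k ⊗ₜ[F] A.right i)) := by
            exact Finset.sum_congr rfl fun i _ => Finset.sum_congr rfl fun k _ =>
              (f2_tmul _ _ _).symm
        _ = ∑ i ∈ A.index, ∑ k ∈ (A2 i).index,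
              f2 (A.left i ⊗ₜ[F] ((A2 i).left k ⊗ₜ[F] (A2 i).right k)) :=
            aux_repr_swap f2 A A1 A2
        _ = ∑ i ∈ A.index,
              Coalgebra.counit (R := F) (A.right i) • ((A.left i ⊗ₜ[F] (1:H)) * e) := by
            refine Finset.sum_congr rfl fun i _ => ?_
            have step : ∀ k ∈ (A2 i).index,
                f2 (A.left i ⊗ₜ[F] ((A2 i).left k ⊗ₜ[F] (A2 i).right k)) =
                ((A.left i ⊗ₜ[F] (1:H)) * e) *
                  ((1:H) ⊗ₜ[F] (antipode (R := F) ((A2 i).left k) * (A2 i).right k)) := by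
              intro k _; rw [f2_tmul]
            rw [Finset.sum_congr rfl step, ← Finset.mul_sum, ← tmul_sum,
              sum_antipode_mul_eq_smul (A2 i), tmul_smul, ← Algebra.TensorProduct.one_def,
              mul_smul_comm, mul_one]
        _ = (h ⊗ₜ[F] (1:H)) * e := by
            conv_rhs => rw [← aux_sum_smul_counit A]
            rw [sum_tmul, Finset.sum_mul]
            refine Finset.sum_congr rfl fun i _ => ?_
            rw [← smul_tmul', smul_mul_assoc]
    rw [← hE2, hE1]
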